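/- Almost-everywhere derivative of the pseudo-inverse. Let μ be a finite nonnegative Borel measure on ℝ, let x₁ be its pseudo-inverse, and let f : ℝ → [0,∞) be any representative of the Radon–Nikodym derivative of μ with respect to Lebesgue measure. Then for Lebesgue-almost every X ∈ ℝ, x₁ is differentiable at X and either x₁'(X) = 0 or x₁'(X)·(1 + f(x₁(X))) = 1; in particular 0 ≤ x₁'(X) ≤ 1 for almost every X. -/

import Mathlib

open MeasureTheory

/-- The pseudo-inverse associated to a finite measure `μ` on `ℝ`:
`x₁ X = sup {x | x' + μ((-∞,x')) < X for all x' < x}`. -/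
noncomputable def pseudoInv (μ : Measure ℝ) (X : ℝ) : ℝ :=
  sSup {x : ℝ | ∀ x' < x, x' + (μ (Set.Iio x')).toReal < X}

namespace PseudoInvAux

open Set Filter Topology Asymptotics

variable (μ : Measure ℝ) [IsFiniteMeasure μ]

/-- The admissible set whose supremum is `pseudoInv μ X`. -/
def Sset (X : ℝ) : Set ℝ := {x : ℝ | ∀ x' < x, x' + (μ (Set.Iio x')).toReal < X}

lemma pseudoInv_def (X : ℝ) : pseudoInv μ X = sSup (Sset μ X) := rfl

lemma toReal_mono_meas {s t : Set ℝ} (h : s ⊆ t) : (μ s).toReal ≤ (μ t).toReal :=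
  ENNReal.toReal_mono (measure_ne_top μ t) (measure_mono h)

lemma S_nonempty (X : ℝ) : (Sset μ X).Nonempty := by
  refine ⟨X - (μ Set.univ).toReal - 1, fun x' hx' => ?_⟩
  have h1 : (μ (Set.Iio x')).toReal ≤ (μ Set.univ).toReal :=
    toReal_mono_meas μ (subset_univ _)
  linarith

lemma S_ub (X : ℝ) : ∀ x ∈ Sset μ X, x ≤ X := by
  intro x hx
  by_contra h
  push_neg at h
  have h1 := hx X h
  have h2 : (0:ℝ) ≤ (μ (Set.Iio X)).toReal := ENNReal.toReal_nonneg
  linarith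

lemma S_bdd (X : ℝ) : BddAbove (Sset μ X) := ⟨X, S_ub μ X⟩

lemma lt_pinv {X x : ℝ} (h : x < pseudoInv μ X) : x + (μ (Set.Iic x)).toReal < X := by
  obtain ⟨z, hz, hxz⟩ := exists_lt_of_lt_csSup (S_nonempty μ X) h
  obtain ⟨x', hx1, hx2⟩ := exists_between hxz
  have h3 := hz x' hx2
  have h4 : (μ (Set.Iic x)).toReal ≤ (μ (Set.Iio x')).toReal :=
    toReal_mono_meas μ (fun y hy => lt_of_le_of_lt hy hx1)
  linarith

lemma pinv_lt {X x : ℝ} (h : pseudoInv μ X < x) : X ≤ x + (μ (Set.Iic x)).toReal := by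
  have hx : x ∉ Sset μ X := fun hmem => absurd (le_csSup (S_bdd μ X) hmem) (not_le.mpr h)
  simp only [Sset, mem_setOf_eq, not_forall, not_lt] at hx
  obtain ⟨x', hx'1, hx'2⟩ := hx
  have h4 : (μ (Set.Iio x')).toReal ≤ (μ (Set.Iic x)).toReal :=
    toReal_mono_meas μ (fun y hy => le_trans (le_of_lt hy) hx'1.le)
  linarith

lemma pinv_mono : Monotone (pseudoInv μ) := by
  intro X Y hXY
  exact csSup_le_csSup (S_bdd μ Y) (S_nonempty μ X)
    (fun z hz x' hx' => lt_of_lt_of_le (hz x' hx') hXY)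

lemma pinv_lip_le {X Y : ℝ} (h : X ≤ Y) : pseudoInv μ Y ≤ pseudoInv μ X + (Y - X) := by
  refine csSup_le (S_nonempty μ Y) (fun z hz => ?_)
  have hmem : z - (Y - X) ∈ Sset μ X := by
    intro x' hx'
    have h2 := hz (x' + (Y - X)) (by linarith)
    have h3 : (μ (Set.Iio x')).toReal ≤ (μ (Set.Iio (x' + (Y - X)))).toReal :=
      toReal_mono_meas μ (Iio_subset_Iio (by linarith))
    linarith
  have := le_csSup (S_bdd μ X) hmem
  rw [pseudoInv_def]
  linarith

lemma pinv_abs_sub_le (X Y : ℝ) : |pseudoInv μ X - pseudoInv μ Y| ≤ |X - Y| := by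
  rcases le_total X Y with h | h
  · have h1 := pinv_mono μ h
    have h2 := pinv_lip_le μ h
    rw [abs_sub_comm, abs_of_nonneg (by linarith), abs_sub_comm, abs_of_nonneg (by linarith)]
    linarith
  · have h1 := pinv_mono μ h
    have h2 := pinv_lip_le μ h
    rw [abs_of_nonneg (by linarith), abs_of_nonneg (by linarith)]
    linarith

lemma pinv_lip : LipschitzWith 1 (pseudoInv μ) := by
  refine LipschitzWith.of_dist_le_mul fun X Y => ?_
  rw [Real.dist_eq, Real.dist_eq, NNReal.coe_one, one_mul]
  exact pinv_abs_sub_le μ X Y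

/-- The right-continuous monotone function `x ↦ x + μ((-∞,x])` as a Stieltjes function. -/
noncomputable def G : StieltjesFunction ℝ where
  toFun x := x + (μ (Set.Iic x)).toReal
  mono' a b hab := add_le_add hab (toReal_mono_meas μ (Iic_subset_Iic.mpr hab))
  right_continuous' := by
    intro a
    have hseq : Tendsto (fun n : ℕ => (μ (Set.Iic (a + 1 / (n + 1)))).toReal) atTop
        (𝓝 (μ (Set.Iic a)).toReal) := by
      have h1 : Tendsto (fun n : ℕ => μ (Set.Iic (a + 1 / (n + 1)))) atTop
          (𝓝 (μ (⋂ n : ℕ, Set.Iic (a + 1 / (n + 1))))) := by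
        refine tendsto_measure_iInter_atTop (fun n => measurableSet_Iic.nullMeasurableSet)
          (fun m n hmn => Iic_subset_Iic.mpr ?_) ⟨0, measure_ne_top μ _⟩
        have : (1 : ℝ) / (n + 1) ≤ 1 / (m + 1) := by
          apply one_div_le_one_div_of_le <;> [positivity; exact_mod_cast by omega]
        linarith
      have h2 : (⋂ n : ℕ, Set.Iic (a + 1 / ((n : ℝ) + 1))) = Set.Iic a := by
        ext x
        simp only [mem_iInter, mem_Iic]
        constructor
        · intro h
          by_contra hx
          push_neg at hx
          obtain ⟨n, hn⟩ := exists_nat_one_div_lt (by linarith : 0 < x - a)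
          have := h n
          linarith
        · intro h n
          have : (0:ℝ) < 1 / (n + 1) := by positivity
          linarith
      rw [h2] at h1
      exact (ENNReal.tendsto_toReal (measure_ne_top μ _)).comp h1
    have hM : Tendsto (fun x => (μ (Set.Iic x)).toReal) (𝓝[≥] a) (𝓝 (μ (Set.Iic a)).toReal) := by
      rw [Metric.tendsto_nhdsWithin_nhds]
      intro ε hε
      obtain ⟨n, hn⟩ := (hseq.eventually_lt_const
        (by linarith : (μ (Set.Iic a)).toReal < (μ (Set.Iic a)).toReal + ε)).exists
      refine ⟨1 / (n + 1), by positivity, fun x hx hdist => ?_⟩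
      have h1 : (μ (Set.Iic a)).toReal ≤ (μ (Set.Iic x)).toReal :=
        toReal_mono_meas μ (Iic_subset_Iic.mpr hx)
      have h2 : (μ (Set.Iic x)).toReal ≤ (μ (Set.Iic (a + 1 / (n + 1)))).toReal := by
        refine toReal_mono_meas μ (Iic_subset_Iic.mpr ?_)
        rw [Real.dist_eq] at hdist
        have := abs_lt.mp hdist
        linarith [this.2]
      rw [Real.dist_eq, abs_lt]
      constructor <;> linarith
    exact (continuousWithinAt_id.add hM)

lemma G_apply (x : ℝ) : G μ x = x + (μ (Set.Iic x)).toReal := rfl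

lemma G_measure : (G μ).measure = volume + μ := by
  refine Measure.ext_of_Ioc _ _ (fun a b hab => ?_)
  rw [StieltjesFunction.measure_Ioc]
  have hsplit : μ (Set.Iic b) = μ (Set.Iic a) + μ (Set.Ioc a b) := by
    rw [← measure_union (Iic_disjoint_Ioc le_rfl) measurableSet_Ioc, Iic_union_Ioc_eq_Iic hab.le]
  have htr : (μ (Set.Iic b)).toReal = (μ (Set.Iic a)).toReal + (μ (Set.Ioc a b)).toReal := by
    rw [hsplit, ENNReal.toReal_add (measure_ne_top μ _) (measure_ne_top μ _)]
  have hval : G μ b - G μ a = (b - a) + (μ (Set.Ioc a b)).toReal := by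
    rw [G_apply, G_apply, htr]; ring
  rw [hval, ENNReal.ofReal_add (by linarith : (0:ℝ) ≤ b - a) ENNReal.toReal_nonneg,
    ENNReal.ofReal_toReal (measure_ne_top μ _), Measure.add_apply, Real.volume_Ioc]

/-- helper: `a ≤ b` if `a ≤ b + η` for all positive `η`. -/
lemma le_of_forall_pos_le_add' {a b : ℝ} (h : ∀ η : ℝ, 0 < η → a ≤ b + η) : a ≤ b := by
  by_contra hab
  push_neg at hab
  have := h ((a - b) / 2) (by linarith)
  linarith

/-- Key lemma: if `G` has positive derivative `c` at `pseudoInv μ X`, then the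
pseudo-inverse has derivative `c⁻¹` at `X`. -/
lemma hasDerivAt_pinv {X c : ℝ} (hc : 0 < c) (hG : HasDerivAt (G μ) c (pseudoInv μ X)) :
    HasDerivAt (pseudoInv μ) c⁻¹ X := by
  set x₀ := pseudoInv μ X with hx₀def
  have hGX : G μ x₀ = X := by
    have hcont := hG.continuousAt
    have hle : G μ x₀ ≤ X := by
      refine le_of_tendsto (hcont.continuousWithinAt (s := Set.Iio x₀)) ?_
      filter_upwards [self_mem_nhdsWithin] with y hy
      exact (lt_pinv μ hy).le
    have hge : X ≤ G μ x₀ := by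
      refine ge_of_tendsto (hcont.continuousWithinAt (s := Set.Ioi x₀)) ?_
      filter_upwards [self_mem_nhdsWithin] with y hy
      exact pinv_lt μ hy
    linarith
  rw [hasDerivAt_iff_isLittleO, isLittleO_iff]
  intro ε hε
  have hδ : (0:ℝ) < ε * c := by positivity
  obtain ⟨r, hr, hball⟩ := Metric.eventually_nhds_iff.mp
    ((hasDerivAt_iff_isLittleO.mp hG).def hδ)
  have main : ∀ X', dist X' X < r / 2 →
      |pseudoInv μ X' - x₀ - (X' - X) * c⁻¹| ≤ ε * |X' - X| := by
    intro X' hX'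
    rw [Real.dist_eq] at hX'
    set u := pseudoInv μ X' - x₀ with hudef
    have hu_le : |u| ≤ |X' - X| := by
      have := pinv_abs_sub_le μ X' X
      rw [hudef, hx₀def]
      exact this
    have key : ∀ s : ℝ, |s| = 1 → ∀ η : ℝ, 0 < η →
        s * (X' - X - c * u) ≤ ε * c * |u| + η := by
      intro s hs η hη
      set ε' := min (η / (c + ε * c)) (r / 4) with hε'def
      have hε'pos : 0 < ε' := lt_min (by positivity) (by positivity)
      have hε'r : ε' ≤ r / 4 := min_le_right _ _
      have hε'η : (c + ε * c) * ε' ≤ η := by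
        have h1 : ε' ≤ η / (c + ε * c) := min_le_left _ _
        rw [← le_div_iff₀' (by positivity)]
        exact h1
      set y := pseudoInv μ X' + s * ε' with hydef
      have hyd : dist y x₀ < r := by
        rw [Real.dist_eq]
        have h1 : y - x₀ = u + s * ε' := by rw [hydef, hudef]; ring
        have h2 : |u + s * ε'| ≤ |u| + ε' := by
          calc |u + s * ε'| ≤ |u| + |s * ε'| := abs_add_le _ _
            _ = |u| + ε' := by rw [abs_mul, hs, one_mul, abs_of_pos hε'pos]
        rw [h1]
        calc |u + s * ε'| ≤ |u| + ε' := h2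
          _ ≤ |X' - X| + r / 4 := add_le_add hu_le hε'r
          _ < r / 2 + r / 4 := by linarith
          _ < r := by linarith
      have hb := hball hyd
      simp only [Real.norm_eq_abs, smul_eq_mul] at hb
      have hyu : y - x₀ = u + s * ε' := by rw [hydef, hudef]; ring
      rw [hyu] at hb
      have habs2 : |u + s * ε'| ≤ |u| + ε' := by
        calc |u + s * ε'| ≤ |u| + |s * ε'| := abs_add_le _ _
          _ = |u| + ε' := by rw [abs_mul, hs, one_mul, abs_of_pos hε'pos]
      have hb2 : |G μ y - G μ x₀ - (u + s * ε') * c| ≤ ε * c * (|u| + ε') := by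
        calc |G μ y - G μ x₀ - (u + s * ε') * c| ≤ ε * c * |u + s * ε'| := hb
          _ ≤ ε * c * (|u| + ε') := by
              exact mul_le_mul_of_nonneg_left habs2 (by positivity)
      have hb3 := abs_le.mp hb2
      rcases (abs_eq (by norm_num : (0:ℝ) ≤ 1)).mp hs with hs1 | hs1
      · -- s = 1 : use y > pseudoInv X', so X' ≤ G y
        have hy_gt : pseudoInv μ X' < y := by rw [hydef, hs1]; linarith
        have hXle : X' ≤ G μ y := pinv_lt μ hy_gt
        rw [hs1] at hb3
        have h2 := hb3.2
        rw [hGX] at h2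
        have hkey : X' - X - c * u ≤ ε * c * |u| + (c + ε * c) * ε' := by
          nlinarith [h2, hXle]
        rw [hs1, one_mul]
        linarith
      · -- s = -1 : use y < pseudoInv X', so G y < X'
        have hy_lt : y < pseudoInv μ X' := by rw [hydef, hs1]; linarith
        have hXge : G μ y < X' := lt_pinv μ hy_lt
        rw [hs1] at hb3
        have h1 := hb3.1
        rw [hGX] at h1
        have hkey : -(X' - X - c * u) ≤ ε * c * |u| + (c + ε * c) * ε' := by
          nlinarith [h1, hXge]
        rw [hs1]
        linarith
    have habs : |X' - X - c * u| ≤ ε * c * |u| := by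
      rw [abs_le]
      constructor
      · have := fun η hη => key (-1) (by norm_num) η hη
        have h2 : -(X' - X - c * u) ≤ ε * c * |u| :=
          le_of_forall_pos_le_add' (fun η hη => by linarith [this η hη])
        linarith
      · exact le_of_forall_pos_le_add' (fun η hη => by linarith [key 1 (by norm_num) η hη])
    have hexp : pseudoInv μ X' - x₀ - (X' - X) * c⁻¹ = -(X' - X - c * u) * c⁻¹ := by
      rw [hudef]
      field_simp
      ring
    rw [hexp, abs_mul, abs_neg, abs_inv, abs_of_pos hc]
    calc |X' - X - c * u| * c⁻¹ ≤ ε * c * |u| * c⁻¹ := by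
          exact mul_le_mul_of_nonneg_right habs (by positivity)
      _ = ε * |u| := by field_simp
      _ ≤ ε * |X' - X| := mul_le_mul_of_nonneg_left hu_le hε.le
  filter_upwards [Metric.ball_mem_nhds X (by positivity : (0:ℝ) < r / 2)] with X' hX'
  have := main X' (by simpa [Metric.mem_ball] using hX')
  simpa [Real.norm_eq_abs, smul_eq_mul] using this

lemma deriv_eq_zero_of_right_const {h : ℝ → ℝ} {X Y : ℝ} (hXY : X < Y)
    (hc : ∀ z ∈ Set.Ioo X Y, h z = h X) (hd : DifferentiableAt ℝ h X) :
    deriv h X = 0 := by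
  have h1 : Tendsto (slope h X) (𝓝[≠] X) (𝓝 (deriv h X)) :=
    hasDerivAt_iff_tendsto_slope.mp hd.hasDerivAt
  have h2 : Tendsto (slope h X) (𝓝[>] X) (𝓝 (deriv h X)) :=
    h1.mono_left (nhdsWithin_mono X (fun z hz => ne_of_gt hz))
  have h3 : Tendsto (slope h X) (𝓝[>] X) (𝓝 0) := by
    have : ∀ᶠ z in 𝓝[>] X, slope h X z = 0 := by
      filter_upwards [Ioo_mem_nhdsGT_of_mem ⟨le_refl X, hXY⟩] with z hz
      rw [slope_def_field, hc z hz, sub_self, div_eq_zero_iff]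
      left; rfl
    exact Tendsto.congr' (this.mono fun z hz => hz.symm) tendsto_const_nhds
  exact tendsto_nhds_unique h2 h3

end PseudoInvAux

open PseudoInvAux Set Filter Topology Asymptotics

/-- Almost-everywhere derivative of the pseudo-inverse: if `f ≥ 0`
is a representative of the Radon–Nikodym derivative of `μ` with respect to Lebesgue
measure, then for a.e. `X` the pseudo-inverse `x₁` is differentiable at `X` and either
`x₁'(X) = 0` or `x₁'(X) · (1 + f (x₁ X)) = 1`; in particular `0 ≤ x₁'(X) ≤ 1` a.e. -/
theorem pseudoInv_ae_deriv (μ : Measure ℝ) [IsFiniteMeasure μ]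
    (f : ℝ → ℝ) (hf0 : ∀ x : ℝ, 0 ≤ f x)
    (hf : (fun x => ENNReal.ofReal (f x)) =ᵐ[volume] μ.rnDeriv volume) :
    ∀ᵐ X ∂(volume : Measure ℝ), DifferentiableAt ℝ (pseudoInv μ) X ∧
      (deriv (pseudoInv μ) X = 0 ∨
        deriv (pseudoInv μ) X * (1 + f (pseudoInv μ X)) = 1) ∧
      0 ≤ deriv (pseudoInv μ) X ∧ deriv (pseudoInv μ) X ≤ 1 := by
  classical
  set x₁ := pseudoInv μ with hx₁
  -- Step 1: a.e. derivative of G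
  have hrn : Measure.rnDeriv (G μ).measure volume =ᵐ[volume]
      (fun x => 1 + ENNReal.ofReal (f x)) := by
    rw [G_measure μ]
    filter_upwards [Measure.rnDeriv_add' volume μ volume, Measure.rnDeriv_self volume,
      hf] with x h1 h2 h3
    rw [h1, Pi.add_apply, h2, ← h3]
  have hA : ∀ᵐ x ∂(volume : Measure ℝ), HasDerivAt (G μ) (1 + f x) x := by
    filter_upwards [(G μ).ae_hasDerivAt, hrn] with x h1 h2
    rw [h2] at h1
    have : (1 + ENNReal.ofReal (f x)).toReal = 1 + f x := by
      rw [ENNReal.toReal_add ENNReal.one_ne_top ENNReal.ofReal_ne_top, ENNReal.toReal_one,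
        ENNReal.toReal_ofReal (hf0 x)]
    rwa [this] at h1
  -- Step 2: measurable null superset of bad points
  set N : Set ℝ := toMeasurable volume {x | ¬ HasDerivAt (G μ) (1 + f x) x} with hN
  have hNnull : volume N = 0 := by
    rw [hN, measure_toMeasurable]
    exact hA
  have hNmeas : MeasurableSet N := measurableSet_toMeasurable _ _
  -- Step 3: on the preimage of N, derivative vanishes a.e.
  set s : Set ℝ := x₁ ⁻¹' N ∩ {X | DifferentiableAt ℝ x₁ X} ∩ {X | deriv x₁ X ≠ 0} with hs
  have hsmeas : MeasurableSet s := by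
    refine (((pinv_lip μ).continuous.measurable hNmeas).inter
      (measurableSet_of_differentiableAt ℝ x₁)).inter ?_
    exact (measurable_deriv x₁) (measurableSet_singleton 0) |>.compl
  have hinj : InjOn x₁ s := by
    intro X hX Y hY hXY
    by_contra hne
    rcases lt_or_gt_of_ne hne with hlt | hlt
    · have hconst : ∀ z ∈ Set.Ioo X Y, x₁ z = x₁ X := by
        intro z hz
        refine le_antisymm ?_ (pinv_mono μ hz.1.le)
        rw [show x₁ X = x₁ Y from hXY]
        exact pinv_mono μ hz.2.le
      exact hX.2 (deriv_eq_zero_of_right_const hlt hconst hX.1.2)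
    · have hconst : ∀ z ∈ Set.Ioo Y X, x₁ z = x₁ Y := by
        intro z hz
        refine le_antisymm ?_ (pinv_mono μ hz.1.le)
        rw [show x₁ Y = x₁ X from hXY.symm]
        exact pinv_mono μ hz.2.le
      exact hY.2 (deriv_eq_zero_of_right_const hlt hconst hY.1.2)
  have hfderiv : ∀ X ∈ s, HasFDerivWithinAt x₁
      ((1 : ℝ →L[ℝ] ℝ).smulRight (deriv x₁ X)) s X :=
    fun X hX => (hX.1.2.hasDerivAt.hasDerivWithinAt).hasFDerivWithinAt
  have himage : volume (x₁ '' s) = 0 :=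
    measure_mono_null (image_subset_iff.mpr (fun X hX => hX.1.1)) hNnull
  have hjac : (∫⁻ X in s, ENNReal.ofReal |deriv x₁ X| ∂volume) = 0 := by
    have := lintegral_abs_det_fderiv_eq_addHaar_image volume hsmeas hfderiv hinj
    simp only [ContinuousLinearMap.det_smulRight, ContinuousLinearMap.one_apply, one_mul] at this
    rw [this, himage]
  have hzero : ∀ᵐ X ∂(volume : Measure ℝ), X ∈ s → ENNReal.ofReal |deriv x₁ X| = 0 := by
    have := (setLIntegral_eq_zero_iff hsmeas
      (ENNReal.measurable_ofReal.comp (measurable_deriv x₁).abs)).mp hjac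
    simpa [Function.comp] using this
  -- Step 4: conclude
  filter_upwards [(pinv_lip μ).ae_differentiableAt, hzero] with X hdiff hz
  have hd0 : x₁ X ∈ N → deriv x₁ X = 0 := by
    intro hmem
    by_contra hne
    have hXs : X ∈ s := ⟨⟨hmem, hdiff⟩, hne⟩
    have := hz hXs
    rw [ENNReal.ofReal_eq_zero] at this
    exact hne (abs_eq_zero.mp (le_antisymm this (abs_nonneg _)))
  by_cases hmem : x₁ X ∈ N
  · have h0 := hd0 hmem
    exact ⟨hdiff, Or.inl h0, by rw [h0], by rw [h0]; norm_num⟩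
  · have hGd : HasDerivAt (G μ) (1 + f (x₁ X)) (x₁ X) := by
      by_contra hcon
      exact hmem (subset_toMeasurable _ _ hcon)
    have hcpos : (0:ℝ) < 1 + f (x₁ X) := by linarith [hf0 (x₁ X)]
    have hder : HasDerivAt x₁ (1 + f (x₁ X))⁻¹ X := hasDerivAt_pinv μ hcpos hGd
    have hdval : deriv x₁ X = (1 + f (x₁ X))⁻¹ := hder.deriv
    refine ⟨hdiff, Or.inr ?_, ?_, ?_⟩
    · rw [hdval, inv_mul_cancel₀ (ne_of_gt hcpos)]
    · rw [hdval]; positivity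
    · rw [hdval]
      have : (1:ℝ) ≤ 1 + f (x₁ X) := by linarith [hf0 (x₁ X)]
      exact inv_le_one_of_one_le₀ this
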